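/- Define c_n := t_{n−1}, cᵢ := vᵢ·sᵢ·vᵢ⁻¹ for 2 ≤ i ≤ n−1, and c₁ := v₁·s₁. Then c_n·c_{n−1}·c_{n−2} ⋯ c₂·c₁ = t_{n−1}·(g_{n−1}⁻¹·g_{n−2}·g_{n−3}⁻¹ ⋯ g₂·g₁⁻¹)·t_{n−1}. In particular, c_n·c_{n−1} ⋯ c₁ = 1 if and only if g_{n−1}⁻¹·g_{n−2}·g_{n−3}⁻¹ ⋯ g₂·g₁⁻¹ = 1. -/
import Mathlib

private lemma prod_rev_cons {G : Type*} [Monoid G] (c : ℕ → G) (a : ℕ) (l : List ℕ) :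
    ((a :: l).reverse.map c).prod = (l.reverse.map c).prod * c a := by simp


/-- Let `n ≥ 6` be even, `G` a group, `t 1, …, t (n-1)` and
`s 1, …, s (n-1)` involutions with `t 1 = t (n-1)`, let `v` be as in the paper
(`v n = v (n-1) = 1`; for `1 ≤ i ≤ n-2`, `v i = t (n-1) ⋯ t (i+1) * t i` for even `i`
and `v i = t (n-1) ⋯ t (i+1)` for odd `i`), and set `g i = t i * s i`.
Define `c n = t (n-1)`, `c i = v i * s i * (v i)⁻¹` for `2 ≤ i ≤ n-1`, `c 1 = v 1 * s 1`.
Then `c n * c (n-1) * ⋯ * c 1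
  = t (n-1) * ((g (n-1))⁻¹ * g (n-2) * (g (n-3))⁻¹ * ⋯ * g 2 * (g 1)⁻¹) * t (n-1)`;
in particular the left product is `1` iff
`(g (n-1))⁻¹ * g (n-2) * ⋯ * g 2 * (g 1)⁻¹ = 1`. -/
theorem c_product_eq_conjugated_alternating_g_product {G : Type*} [Group G] (n : ℕ)
    (hn : 6 ≤ n) (hEven : Even n) (t s v g c : ℕ → G)
    (ht : ∀ i, 1 ≤ i → i ≤ n - 1 → t i * t i = 1)
    (ht1 : t 1 = t (n - 1))
    (hs : ∀ i, 1 ≤ i → i ≤ n - 1 → s i * s i = 1)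
    (hvn : v n = 1) (hvn1 : v (n - 1) = 1)
    (hvi : ∀ i, 1 ≤ i → i ≤ n - 2 →
      v i = if i % 2 = 0 then ((List.range' i (n - i)).reverse.map t).prod
        else ((List.range' (i + 1) (n - 1 - i)).reverse.map t).prod)
    (hg : ∀ i, 1 ≤ i → i ≤ n - 1 → g i = t i * s i)
    (hcn : c n = t (n - 1))
    (hci : ∀ i, 2 ≤ i → i ≤ n - 1 → c i = v i * s i * (v i)⁻¹)
    (hc1 : c 1 = v 1 * s 1) :
    ((List.range' 1 n).reverse.map c).prod =
      t (n - 1) * ((List.range' 1 (n - 1)).reverse.map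
        (fun i => if i % 2 = 1 then (g i)⁻¹ else g i)).prod * t (n - 1) ∧
    (((List.range' 1 n).reverse.map c).prod = 1 ↔
      ((List.range' 1 (n - 1)).reverse.map
        (fun i => if i % 2 = 1 then (g i)⁻¹ else g i)).prod = 1) := by
  obtain ⟨m, hm⟩ := hEven
  set f : ℕ → G := fun i => if i % 2 = 1 then (g i)⁻¹ else g i with hf
  have htc : ∀ i, 1 ≤ i → i ≤ n - 1 → ∀ x : G, t i * (t i * x) = x := by
    intro i h1 h2 x; rw [← mul_assoc, ht i h1 h2, one_mul]
  have htinv : ∀ i, 1 ≤ i → i ≤ n - 1 → (t i)⁻¹ = t i := fun i h1 h2 =>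
    inv_eq_of_mul_eq_one_right (ht i h1 h2)
  have hsinv : ∀ i, 1 ≤ i → i ≤ n - 1 → (s i)⁻¹ = s i := fun i h1 h2 =>
    inv_eq_of_mul_eq_one_right (hs i h1 h2)
  have hginv : ∀ i, 1 ≤ i → i ≤ n - 1 → (g i)⁻¹ = s i * t i := by
    intro i h1 h2
    rw [hg i h1 h2, mul_inv_rev, htinv i h1 h2, hsinv i h1 h2]
  have hV1 : ∀ k, k % 2 = 1 → k ≤ n - 2 → v k = v (k + 1) := by
    intro k hk hk2
    have h3 : k + 1 ≤ n - 2 := by omega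
    rw [hvi k (by omega) hk2, if_neg (by omega), hvi (k+1) (by omega) h3,
      if_pos (by omega), show n - 1 - k = n - (k+1) by omega]
  have hV2 : ∀ k, k % 2 = 0 → 2 ≤ k → k ≤ n - 2 → v k = v (k + 1) * (t (k + 1) * t k) := by
    intro k hk h2 hk2
    rw [hvi k (by omega) hk2, if_pos hk]
    have hsplit : List.range' k (n - k) = k :: (k+1) :: List.range' (k+2) (n-k-2) := by
      obtain ⟨e, he⟩ : ∃ e, n - k = e + 2 := ⟨n - k - 2, by omega⟩
      rw [show n - k - 2 = e by omega, he, List.range'_succ, List.range'_succ]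
    rw [hsplit, prod_rev_cons, prod_rev_cons]
    by_cases hke : k = n - 2
    · subst hke
      rw [show n - (n-2) - 2 = 0 by omega, show n - 2 + 1 = n - 1 by omega, hvn1]
      simp [mul_assoc]
    · have h3 : k + 1 ≤ n - 2 := by omega
      rw [hvi (k+1) (by omega) h3, if_neg (by omega),
        show n - 1 - (k+1) = n - k - 2 by omega, show k + 1 + 1 = k + 2 from rfl]
      simp [mul_assoc]
  have key : ∀ d, d + 3 ≤ n →
      ((List.range' (n-1-d) (d+2)).reverse.map c).prod
        = t (n-1) * ((List.range' (n-1-d) (d+1)).reverse.map f).prod *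
          ((if (n-1-d) % 2 = 1 then t (n-1-d) else 1) * (v (n-1-d))⁻¹) := by
    intro d
    induction d with
    | zero =>
      intro _
      simp only [Nat.sub_zero]
      rw [show (2:ℕ) = 1 + 1 from rfl, List.range'_succ, List.range'_succ,
        show n - 1 + 1 = n by omega]
      rw [prod_rev_cons, prod_rev_cons]
      simp only [List.range'_zero, List.reverse_nil, List.map_nil, List.prod_nil, one_mul]
      rw [List.range'_one, hcn, hci (n-1) (by omega) le_rfl, hvn1]
      have hodd : (n-1) % 2 = 1 := by omega
      simp only [List.map_cons, List.map_nil, List.prod_cons, List.prod_nil,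
        List.reverse_cons, List.reverse_nil, List.nil_append, hf]
      rw [if_pos hodd, if_pos hodd, hginv (n-1) (by omega) le_rfl]
      simp [mul_assoc, htc (n-1) (by omega) le_rfl, ht (n-1) (by omega) le_rfl]
    | succ d ih =>
      intro hd
      have ih' := ih (by omega)
      set k := n - 1 - (d+1) with hkdef
      have hk1 : n - 1 - d = k + 1 := by omega
      have hk2 : 2 ≤ k := by omega
      have hk3 : k ≤ n - 2 := by omega
      rw [hk1] at ih'
      have ec : List.range' k (d+1+2) = k :: List.range' (k+1) (d+2) := by
        rw [show d+1+2 = (d+2)+1 by omega, List.range'_succ]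
      have ef : List.range' k (d+1+1) = k :: List.range' (k+1) (d+1) := by
        rw [List.range'_succ]
      rw [ec, prod_rev_cons, ih', ef, prod_rev_cons, hci k hk2 (by omega)]
      rcases Nat.mod_two_eq_zero_or_one k with hk | hk
      · have hk1o : (k+1) % 2 = 1 := by omega
        rw [if_pos hk1o, if_neg (by omega), hV2 k hk hk2 hk3]
        have hfk : f k = t k * s k := by
          simp only [hf]; rw [if_neg (by omega), hg k (by omega) (by omega)]
        rw [hfk]
        simp [mul_assoc, mul_inv_rev, htinv k (by omega) (by omega),
          htinv (k+1) (by omega) (by omega), htc (k+1) (by omega) (by omega),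
          htc k (by omega) (by omega)]
      · rw [if_pos hk, if_neg (by omega), hV1 k hk hk3]
        have hfk : f k = s k * t k := by
          simp only [hf]; rw [if_pos hk, hginv k (by omega) (by omega)]
        rw [hfk]
        simp [mul_assoc, htc k (by omega) (by omega)]
  have h2 := key (n-3) (by omega)
  rw [show n - 1 - (n-3) = 2 by omega, show n - 3 + 2 = n - 1 by omega,
    show n - 3 + 1 = n - 2 by omega] at h2
  have heq : ((List.range' 1 n).reverse.map c).prod
      = t (n-1) * ((List.range' 1 (n-1)).reverse.map f).prod * t (n-1) := by
    have e1 : List.range' 1 n = 1 :: List.range' 2 (n-1) := by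
      obtain ⟨p, hp⟩ : ∃ p, n = p + 1 := ⟨n-1, by omega⟩
      rw [show n - 1 = p by omega, hp, List.range'_succ]
    have e2 : List.range' 1 (n-1) = 1 :: List.range' 2 (n-2) := by
      obtain ⟨p, hp⟩ : ∃ p, n - 1 = p + 1 := ⟨n-2, by omega⟩
      rw [show n - 2 = p by omega, hp, List.range'_succ]
    rw [e1, prod_rev_cons, h2, e2, prod_rev_cons]
    have hf1 : f 1 = s 1 * t 1 := by
      simp [hf, hginv 1 (by omega) (by omega)]
    rw [hf1, hc1, hV1 1 rfl (by omega), if_neg (by omega), ht1]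
    simp [mul_assoc, ht (n-1) (by omega) le_rfl]
  refine ⟨heq, ?_⟩
  rw [heq]
  constructor
  · intro h
    have h2 := congrArg (fun x => t (n-1) * x * t (n-1)) h
    simpa [mul_assoc, htc (n-1) (by omega) le_rfl, ht (n-1) (by omega) le_rfl] using h2
  · intro h
    rw [h, mul_one, ht (n-1) (by omega) le_rfl]
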